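/- Let X be a finite T₀ topological space and let f, g be homeomorphisms of X. Then f is isotopic to g if and only if f = g. Consequently, the mapping class group of X coincides with its full homeomorphism group. -/

import Mathlib

open unitInterval

/-- An isotopy between homeomorphisms `f` and `g` of `X`: a continuous map
`H : X × [0,1] → X` with `H(·,0) = f`, `H(·,1) = g`, and `H(·,t)` a
homeomorphism for every `t`. -/
def Isotopy {X : Type*} [TopologicalSpace X] (f g : X ≃ₜ X) : Prop :=
  ∃ H : X × I → X, Continuous H ∧
    (∀ x, H (x, 0) = f x) ∧
    (∀ x, H (x, 1) = g x) ∧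
    ∀ t : I, ∃ h : X ≃ₜ X, ∀ x, H (x, t) = h x

private lemma iterate_spec {X : Type*} [TopologicalSpace X] (h : X ≃ₜ X)
    (hh : ∀ x, h x ⤳ x) : ∀ (k : ℕ) (a : X), h^[k] a ⤳ a := by
  intro k
  induction k with
  | zero => intro a; simpa using specializes_refl a
  | succ n ih =>
    intro a
    rw [Function.iterate_succ_apply]
    exact (ih (h a)).trans (hh a)

private lemma homeo_spec_id {X : Type*} [TopologicalSpace X] [Finite X] [T0Space X]
    (h : X ≃ₜ X) (hh : ∀ x, h x ⤳ x) (x : X) : h x = x := by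
  obtain ⟨m, n, hmn, heq⟩ := Finite.exists_ne_map_eq_of_infinite (fun k : ℕ => h^[k] x)
  wlog hlt : m < n generalizing m n
  · exact this n m hmn.symm heq.symm (by omega)
  -- from h^[m] x = h^[n] x get h^[n-m] x = x
  have hinj : Function.Injective (h^[m]) := h.injective.iterate m
  have hx : h^[n - m] x = x := by
    have : h^[m] (h^[n - m] x) = h^[m] x := by
      rw [← Function.iterate_add_apply]
      rw [show m + (n - m) = n by omega]
      exact heq.symm
    exact hinj this
  have hjm : 1 ≤ n - m := by omega
  have hxh : x ⤳ h x := by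
    have : h^[n - m] x = h^[n - m - 1] (h x) := by
      conv_lhs => rw [show n - m = (n - m - 1) + 1 by omega, Function.iterate_succ_apply]
    have h2 : h^[n - m - 1] (h x) ⤳ h x := iterate_spec h hh _ (h x)
    rw [← this, hx] at h2
    exact h2
  exact ((hh x).antisymm hxh).eq

private lemma homeo_spec_eq {X : Type*} [TopologicalSpace X] [Finite X] [T0Space X]
    (f g : X ≃ₜ X) (hfg : ∀ x, f x ⤳ g x) (x : X) : f x = g x := by
  have key : ∀ y, (f.trans g.symm) y = y := by
    apply homeo_spec_id
    intro y
    have : g.symm (f y) ⤳ g.symm (g y) := (hfg y).map g.symm.continuous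
    simpa using this
  have := key x
  simp only [Homeomorph.trans_apply] at this
  have := congrArg g this
  simpa using this

/-- For a finite T₀ space `X`, two homeomorphisms are isotopic iff
they are equal; consequently the quotient map from the homeomorphism group to
the mapping class group is a bijection. -/
theorem stmt_6 {X : Type*} [TopologicalSpace X] [Finite X] [T0Space X] :
    (∀ f g : X ≃ₜ X, Isotopy f g ↔ f = g) ∧
    Function.Bijective (Quot.mk (Isotopy (X := X))) := by
  have main : ∀ f g : X ≃ₜ X, Isotopy f g ↔ f = g := by
    intro f g
    constructor
    · rintro ⟨H, hH, h0, h1, hhomeo⟩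
      -- for each homeomorphism h, the set {t | ∀ x, H (x,t) = h x} is open
      have hopen : ∀ h : X ≃ₜ X, IsOpen {t : I | ∀ x, H (x, t) = h x} := by
        intro h
        rw [isOpen_iff_mem_nhds]
        intro t ht
        -- the set of t' with H(x,t') ⤳ h x for all x is a nbhd of t
        have hnhds : {t' : I | ∀ x, H (x, t') ∈ nhdsKer {h x}} ∈ nhds t := by
          have : ∀ x : X, {t' : I | H (x, t') ∈ nhdsKer {h x}} ∈ nhds t := by
            intro x
            have hcont : Continuous fun t' : I => H (x, t') :=
              hH.comp (Continuous.prodMk_right x)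
            have : IsOpen {t' : I | H (x, t') ∈ nhdsKer ({h x} : Set X)} :=
              isOpen_nhdsKer.preimage hcont
            exact this.mem_nhds (by
              simp only [Set.mem_setOf_eq, ht x]
              exact subset_nhdsKer rfl)
          rw [show {t' : I | ∀ x, H (x, t') ∈ nhdsKer {h x}}
              = ⋂ x : X, {t' : I | H (x, t') ∈ nhdsKer {h x}} by ext t'; simp]
          exact Filter.iInter_mem.2 this
        refine Filter.mem_of_superset hnhds ?_
        intro t' ht' x
        obtain ⟨h', hh'⟩ := hhomeo t'
        have hspec : ∀ y, h' y ⤳ h y := by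
          intro y
          have := ht' y
          rw [mem_nhdsKer_singleton] at this
          rwa [hh' y] at this
        rw [hh' x, homeo_spec_eq h' h hspec x]
      -- the set {t | ∀ x, H (x,t) = f x} is clopen
      set S : Set I := {t : I | ∀ x, H (x, t) = f x} with hS
      have hSopen : IsOpen S := hopen f
      have hSclosed : IsClosed S := by
        rw [← isOpen_compl_iff, isOpen_iff_mem_nhds]
        intro t ht
        obtain ⟨h', hh'⟩ := hhomeo t
        refine Filter.mem_of_superset ((hopen h').mem_nhds hh') ?_
        intro t' ht' hmem
        apply ht
        intro x
        rw [hh' x]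
        have : h' x = H (x, t') := (ht' x).symm
        rw [this, hmem x]
      have hSuniv : S = Set.univ := by
        rcases isClopen_iff.1 ⟨hSclosed, hSopen⟩ with h | h
        · exfalso
          have h0' : (0 : I) ∈ S := fun x => h0 x
          rw [h] at h0'
          exact h0'
        · exact h
      have h1' : (1 : I) ∈ S := hSuniv ▸ Set.mem_univ _
      ext x
      rw [← h1 x, h1' x]
    · rintro rfl
      exact ⟨fun p => f p.1, f.continuous.comp continuous_fst,
        fun x => rfl, fun x => rfl, fun t => ⟨f, fun x => rfl⟩⟩
  refine ⟨main, ?_, Quot.exists_rep⟩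
  have key : ∀ a b : X ≃ₜ X, Relation.EqvGen (Isotopy (X := X)) a b → a = b := by
    intro a b hab
    induction hab with
    | rel a b h => exact (main a b).1 h
    | refl a => rfl
    | symm a b _ ih => exact ih.symm
    | trans a b c _ _ ih1 ih2 => exact ih1.trans ih2
  intro f g hfg
  exact key f g (Quot.eq.1 hfg)
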